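/- For k = pn + 1 (q = 0, p ≥ 1, k ≥ n+1), RD*(k) ≥ RD*(n+1): the optimal revisit time for a PMP-D walk with pn+1 visits is at least the optimal revisit time for one with n+1 visits. -/

import Mathlib

/-- Total cost of consecutive steps of a finite sequence of vertices. -/
def chainCost {V : Type*} (c : V → V → ℝ) : List V → ℝ
  | [] => 0
  | [_] => 0
  | x :: y :: t => c x y + chainCost c (y :: t)

/-- A depot-free spanning revisit sequence with `v` visits, written as a list
`(u_0, ..., u_{v-1}, u_0)`: length `v+1`, cyclically closed, consecutive elements
distinct, all elements targets, covering all targets. -/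
def IsRevSeqND {V : Type*} (N : Finset V) (v : ℕ) (l : List V) : Prop :=
  l.length = v + 1 ∧ l.head? = l.getLast? ∧ l.Chain' (· ≠ ·) ∧
    (∀ x ∈ l, x ∈ N) ∧ (∀ t ∈ N, t ∈ l)

/-- A depot-containing spanning revisit sequence with `v` visits, written as a list
`(u_0, ..., u_{v-1}, u_0)`: starts and ends at the same target, consecutive elements
distinct, elements in `N ∪ {d}`, covering all targets, depot appearing exactly once. -/
def IsRevSeqD {V : Type*} [DecidableEq V] (N : Finset V) (d : V) (v : ℕ) (l : List V) : Prop :=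
  l.length = v + 1 ∧ l.head? = l.getLast? ∧ l.Chain' (· ≠ ·) ∧
    (∀ x ∈ l, x ∈ N ∨ x = d) ∧ (∀ t ∈ N, t ∈ l) ∧ l.count d = 1 ∧
    (∃ u ∈ N, l.head? = some u)
/-- Cost of the stretch of the (periodically extended) walk `f` from index `i` to `j`. -/
noncomputable def segCost {V : Type*} (c : V → V → ℝ) (f : ℕ → V) (i j : ℕ) : ℝ :=
  ∑ m ∈ Finset.range (j - i), c (f (i + m)) (f (i + m + 1))

/-- Indices `i < j` are consecutive occurrences of the terminus `f i` in the walk `f`. -/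
def IsRevisit {V : Type*} (f : ℕ → V) (i j : ℕ) : Prop :=
  i < j ∧ f j = f i ∧ ∀ m, i < m → m < j → f m ≠ f i

/-- The stretch of `f` from `i` to `j` visits every target in `N`. -/
def Spans {V : Type*} (N : Finset V) (f : ℕ → V) (i j : ℕ) : Prop :=
  ∀ t ∈ N, ∃ m, i ≤ m ∧ m ≤ j ∧ f m = t

/-- The stretch of `f` from `i` to `j` visits the depot. -/
def HasDepot {V : Type*} (dV : V) (f : ℕ → V) (i j : ℕ) : Prop :=
  ∃ m, i ≤ m ∧ m ≤ j ∧ f m = dV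

/-- The set of travel times of all spanning revisit sequences (with a target terminus,
starting within one period `p`) of the periodic walk `f`. The revisit time of the walk
is the greatest element of this set. -/
def revCosts {V : Type*} (c : V → V → ℝ) (N : Finset V) (p : ℕ) (f : ℕ → V) : Set ℝ :=
  {x | ∃ i j, i < p ∧ f i ∈ N ∧ IsRevisit f i j ∧ Spans N f i j ∧ x = segCost c f i j}

/-- A PMP walk with `v` visits, modelled as its periodic extension: period `v`,
consecutive visits distinct, all visits are targets, every target visited in a period. -/
def IsPMPWalkFun {V : Type*} (N : Finset V) (v : ℕ) (f : ℕ → V) : Prop :=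
  (∀ i, f (i + v) = f i) ∧ (∀ i, f i ≠ f (i + 1)) ∧
    (∀ i, f i ∈ N) ∧ (∀ t ∈ N, ∃ i, i < v ∧ f i = t)

/-- A PMP-D walk with `k` visits, modelled as its periodic extension: period `k`,
starts at the depot, the depot is visited exactly once per period, consecutive visits
distinct, visits in `N ∪ {d}`, every target visited in a period. -/
def IsPMPDWalkFun {V : Type*} (N : Finset V) (dV : V) (k : ℕ) (f : ℕ → V) : Prop :=
  (∀ i, f (i + k) = f i) ∧ (∀ i, f i ≠ f (i + 1)) ∧
    (∀ i, f i = dV ↔ k ∣ i) ∧ (∀ i, f i ∈ N ∨ f i = dV) ∧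
    (∀ t ∈ N, ∃ i, i < k ∧ f i = t)

/-- The set of revisit times of PMP-D walks with `m` visits; `RD*(m)` is its least element. -/
def pmpdRevTimes {V : Type*} (c : V → V → ℝ) (N : Finset V) (dV : V) (m : ℕ) : Set ℝ :=
  {r | ∃ f : ℕ → V, IsPMPDWalkFun N dV m f ∧ IsGreatest (revCosts c N m f) r}

/-- The set of revisit times of PMP walks with `m` visits; `R*(m)` is its least element. -/
def pmpRevTimes {V : Type*} (c : V → V → ℝ) (N : Finset V) (m : ℕ) : Set ℝ :=
  {r | ∃ f : ℕ → V, IsPMPWalkFun N m f ∧ IsGreatest (revCosts c N m f) r}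

section helpers

variable {V : Type*} (c : V → V → ℝ)

lemma segCost_add' (w : ℕ → V) {a b d : ℕ} (hab : a ≤ b) (hbd : b ≤ d) :
    segCost c w a d = segCost c w a b + segCost c w b d := by
  unfold segCost
  have h1 : d - a = (b - a) + (d - b) := by omega
  rw [h1, Finset.sum_range_add]
  congr 1
  refine Finset.sum_congr rfl fun m _ => ?_
  have h2 : a + (b - a + m) = b + m := by omega
  rw [h2]

lemma c_le_segCost (w : ℕ → V) (htri : ∀ x y z, c x z ≤ c x y + c y z)
    {a b : ℕ} (hab : a < b) : c (w a) (w b) ≤ segCost c w a b := by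
  obtain ⟨m, rfl⟩ : ∃ m, b = a + m + 1 := ⟨b - a - 1, by omega⟩
  clear hab
  induction m with
  | zero => simp [segCost]
  | succ m ih =>
    have h1 : segCost c w a (a + (m + 1) + 1)
        = segCost c w a (a + m + 1) + c (w (a + m + 1)) (w (a + m + 1 + 1)) := by
      unfold segCost
      have h3 : a + (m + 1) + 1 - a = (m + 1) + 1 := by omega
      have h4 : a + m + 1 - a = m + 1 := by omega
      rw [h3, h4, Finset.sum_range_succ]
      have h5 : a + (m + 1) = a + m + 1 := by omega
      rw [h5]
    calc c (w a) (w (a + (m + 1) + 1))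
        ≤ c (w a) (w (a + m + 1)) + c (w (a + m + 1)) (w (a + (m + 1) + 1)) := htri _ _ _
      _ ≤ segCost c w a (a + m + 1) + c (w (a + m + 1)) (w (a + (m + 1) + 1)) := by
          linarith [ih]
      _ = segCost c w a (a + (m + 1) + 1) := by
          rw [h1]; congr 2

lemma sum_shift (F : ℕ → ℝ) (P : ℕ) (hF : ∀ m, F (m + P) = F m) (i : ℕ) :
    ∑ m ∈ Finset.range P, F (i + m) = ∑ m ∈ Finset.range P, F m := by
  induction i with
  | zero => simp
  | succ i ih =>
    rw [← ih]
    have h2 : ∑ m ∈ Finset.range (P + 1), F (i + m)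
        = ∑ m ∈ Finset.range P, F (i + (m + 1)) + F (i + 0) := Finset.sum_range_succ' _ P
    have h1 : ∑ m ∈ Finset.range (P + 1), F (i + m)
        = ∑ m ∈ Finset.range P, F (i + m) + F (i + P) := Finset.sum_range_succ _ P
    have h3 : ∀ m, F (i + (m + 1)) = F (i + 1 + m) := fun m => by
      congr 1; omega
    have h4 : ∑ m ∈ Finset.range P, F (i + (m + 1))
        = ∑ m ∈ Finset.range P, F (i + 1 + m) := Finset.sum_congr rfl fun m _ => h3 m
    rw [h4] at h2
    simp only [Nat.add_zero] at h2
    have h6 : F (i + P) = F i := hF i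
    linarith [h1, h2]

lemma idx_mono (idx : ℕ → ℕ) {M : ℕ} (h : ∀ m < M, idx m ≤ idx (m + 1)) :
    ∀ m ≤ M, idx 0 ≤ idx m := by
  intro m hm
  induction m with
  | zero => exact le_rfl
  | succ m ih => exact le_trans (ih (by omega)) (h m (by omega))

lemma telescope (w : ℕ → V) (idx : ℕ → ℕ) :
    ∀ M : ℕ, (∀ m < M, idx m ≤ idx (m + 1)) →
      ∑ m ∈ Finset.range M, segCost c w (idx m) (idx (m + 1))
        = segCost c w (idx 0) (idx M) := by
  intro M
  induction M with
  | zero => intro _; simp [segCost]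
  | succ M ih =>
    intro h
    rw [Finset.sum_range_succ, ih (fun m hm => h m (by omega)),
      ← segCost_add' c w (idx_mono idx h M (by omega)) (h M (by omega))]
end helpers

/-- for `k = pn+1` (the case `q = 0`), `RD*(k) ≥ RD*(n+1)`. -/
theorem lb_q_zero {V : Type*} [DecidableEq V]
    (c : V → V → ℝ) (N : Finset V) (dV : V) (hd : dV ∉ N) (hn : 3 ≤ N.card)
    (hsymm : ∀ x y, c x y = c y x) (hnonneg : ∀ x y, 0 ≤ c x y)
    (htri : ∀ x y z, c x z ≤ c x y + c y z)
    (p k : ℕ) (hp : 1 ≤ p) (hk : k = p * N.card + 1)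
    (RD : ℕ → ℝ)
    (hRDk : IsLeast (pmpdRevTimes c N dV k) (RD k))
    (hRD1 : IsLeast (pmpdRevTimes c N dV (N.card + 1)) (RD (N.card + 1))) :
    RD (N.card + 1) ≤ RD k := by
  classical
  have hNne : N.Nonempty := Finset.card_pos.mp (by omega)
  set n := N.card with hncard
  have hn1 : 1 ≤ n := by omega
  have hk2 : n + 1 ≤ k := by
    have : n ≤ p * n := Nat.le_mul_of_pos_left n hp
    omega
  have hk0 : 0 < k := by omega
  obtain ⟨⟨f, ⟨hper, hne, hdep, hval, hspan⟩, hgr⟩, _⟩ := hRDk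
  have hf0 : f 0 = dV := (hdep 0).mpr (dvd_zero k)
  have hfk : f k = dV := (hdep k).mpr dvd_rfl
  -- last occurrence before the depot, for each target
  set ℓ : V → ℕ := fun t =>
    if h : ((Finset.range k).filter (fun m => f m = t)).Nonempty
    then ((Finset.range k).filter (fun m => f m = t)).max' h else 0 with hℓdef
  have hocc : ∀ t ∈ N, ((Finset.range k).filter (fun m => f m = t)).Nonempty := by
    intro t ht
    obtain ⟨i, hik, hfi⟩ := hspan t ht
    exact ⟨i, Finset.mem_filter.mpr ⟨Finset.mem_range.mpr hik, hfi⟩⟩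
  have hℓmem : ∀ t ∈ N, ℓ t < k ∧ f (ℓ t) = t := by
    intro t ht
    have := Finset.max'_mem _ (hocc t ht)
    rw [Finset.mem_filter, Finset.mem_range] at this
    simpa [hℓdef, dif_pos (hocc t ht)] using this
  have hℓmax : ∀ t ∈ N, ∀ m, ℓ t < m → m < k → f m ≠ t := by
    intro t ht m h1 h2 h3
    have hm : m ∈ (Finset.range k).filter (fun m => f m = t) :=
      Finset.mem_filter.mpr ⟨Finset.mem_range.mpr h2, h3⟩
    have := Finset.le_max' _ m hm
    simp only [hℓdef, dif_pos (hocc t ht)] at h1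
    omega
  obtain ⟨t0, ht0N, ht0min⟩ :=
    Finset.exists_min_image N ℓ hNne
  obtain ⟨hik, hfi⟩ := hℓmem t0 ht0N
  set i := ℓ t0 with hidef
  have ht0d : t0 ≠ dV := fun h => hd (h ▸ ht0N)
  have hex : ∃ m, i < m ∧ f m = t0 := ⟨i + k, by omega, by rw [hper]; exact hfi⟩
  set j := Nat.find hex with hjdef
  obtain ⟨hij, hfj⟩ : i < j ∧ f j = t0 := Nat.find_spec hex
  have hjmin : ∀ m, i < m → m < j → f m ≠ t0 := by
    intro m h1 h2 h3
    exact Nat.find_min hex h2 ⟨h1, h3⟩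
  have hjle : j ≤ i + k := Nat.find_le ⟨by omega, by rw [hper]; exact hfi⟩
  have hjgtk : k < j := by
    rcases lt_trichotomy j k with h | h | h
    · exact absurd hfj (hℓmax t0 ht0N j hij h)
    · exact absurd (h ▸ hfj) (by rw [hfk]; exact fun he => ht0d he.symm)
    · exact h
  have hIsRev : IsRevisit f i j := ⟨hij, by rw [hfj, hfi], fun m h1 h2 => by
    rw [hfi]; exact hjmin m h1 h2⟩
  have hSpans : Spans N f i j := by
    intro t ht
    exact ⟨ℓ t, ht0min t ht, by have := (hℓmem t ht).1; omega, (hℓmem t ht).2⟩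
  set x := segCost c f i j with hxdef
  have hxmem : x ∈ revCosts c N k f := ⟨i, j, hik, hfi ▸ ht0N, hIsRev, hSpans, rfl⟩
  have hxle : x ≤ RD k := hgr.2 hxmem
  -- the rotated cyclic stretch, starting at the depot
  set L := j - i with hLdef
  set d0 := k - i with hd0def
  have hd0L : d0 < L := by omega
  have hd0pos : 0 < d0 := by omega
  have hLpos : 0 < L := by omega
  set w : ℕ → V := fun a => f (i + (d0 + a) % L) with hwdef
  have hw0 : w 0 = dV := by
    have : (d0 + 0) % L = d0 := by rw [Nat.add_zero]; exact Nat.mod_eq_of_lt hd0L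
    simp only [hwdef, this]
    have : i + d0 = k := by omega
    rw [this]; exact hfk
  have hwL : w L = dV := by
    have : (d0 + L) % L = d0 := by
      rw [Nat.add_mod_right]; exact Nat.mod_eq_of_lt hd0L
    simp only [hwdef, this]
    have : i + d0 = k := by omega
    rw [this]; exact hfk
  have hwcover : ∀ t ∈ N, ∃ a, 0 < a ∧ a < L ∧ w a = t := by
    intro t ht
    obtain ⟨hrk, hfr⟩ := hℓmem t ht
    set r := ℓ t with hrdef
    have hir : i ≤ r := ht0min t ht
    set o := r - i with hodef
    have hoL : o < L := by omega
    have hmodcalc : (d0 + (o + (L - d0)) % L) % L = o := by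
      rw [Nat.add_mod_mod]
      have h1 : d0 + (o + (L - d0)) = o + L := by omega
      rw [h1, Nat.add_mod_right]
      exact Nat.mod_eq_of_lt hoL
    have hwa : w ((o + (L - d0)) % L) = t := by
      simp only [hwdef, hmodcalc]
      have : i + o = r := by omega
      rw [this]; exact hfr
    refine ⟨(o + (L - d0)) % L, ?_, Nat.mod_lt _ hLpos, hwa⟩
    rcases Nat.eq_zero_or_pos ((o + (L - d0)) % L) with h | h
    · exfalso; rw [h, hw0] at hwa; exact hd (hwa ▸ ht)
    · exact h
  -- the cyclic stretch has the same cost as the revisit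
  have hwseg : segCost c w 0 L = x := by
    have hterm : ∀ m, c (w m) (w (m + 1))
        = c (f (i + (d0 + m) % L)) (f (i + (d0 + m) % L + 1)) := by
      intro m
      set o := (d0 + m) % L with hodef
      have hoL : o < L := Nat.mod_lt _ hLpos
      have hnext : (d0 + (m + 1)) % L = (o + 1) % L := by
        rw [← Nat.add_assoc, hodef, Nat.mod_add_mod]
      rcases Nat.lt_or_ge (o + 1) L with h | h
      · have : (o + 1) % L = o + 1 := Nat.mod_eq_of_lt h
        simp only [hwdef, hnext, this, hodef]
        rw [Nat.add_assoc]
        rw [← hodef, this]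
      · have hoL1 : o + 1 = L := by omega
        have : (o + 1) % L = 0 := by rw [hoL1, Nat.mod_self]
        simp only [hwdef, hnext, this, hodef]
        rw [Nat.add_zero]
        have h2 : i + (d0 + m) % L + 1 = j := by
          rw [← hodef]; omega
        rw [h2, hfj, ← hfi]
        rw [← hodef, this, Nat.add_zero]
    have hbij : ∑ m ∈ Finset.range L, c (f (i + (d0 + m) % L)) (f (i + (d0 + m) % L + 1))
        = ∑ o ∈ Finset.range L, c (f (i + o)) (f (i + o + 1)) := by
      refine Finset.sum_nbij' (fun m => (d0 + m) % L) (fun o => (o + (L - d0)) % L)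
        ?_ ?_ ?_ ?_ ?_
      · intro a _; exact Finset.mem_range.mpr (Nat.mod_lt _ hLpos)
      · intro a _; exact Finset.mem_range.mpr (Nat.mod_lt _ hLpos)
      · intro a ha
        rw [Finset.mem_range] at ha
        show ((d0 + a) % L + (L - d0)) % L = a
        rw [Nat.mod_add_mod]
        have h1 : d0 + a + (L - d0) = a + L := by omega
        rw [h1, Nat.add_mod_right]
        exact Nat.mod_eq_of_lt ha
      · intro a ha
        rw [Finset.mem_range] at ha
        show (d0 + (a + (L - d0)) % L) % L = a
        rw [Nat.add_mod_mod]
        have h1 : d0 + (a + (L - d0)) = a + L := by omega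
        rw [h1, Nat.add_mod_right]
        exact Nat.mod_eq_of_lt ha
      · intro a _; rfl
    calc segCost c w 0 L = ∑ m ∈ Finset.range L, c (w m) (w (m + 1)) := by
          simp [segCost]
      _ = ∑ m ∈ Finset.range L, c (f (i + (d0 + m) % L)) (f (i + (d0 + m) % L + 1)) :=
          Finset.sum_congr rfl fun m _ => hterm m
      _ = ∑ o ∈ Finset.range L, c (f (i + o)) (f (i + o + 1)) := hbij
      _ = x := by simp [hxdef, segCost, hLdef]
  -- first occurrences of each target along the cyclic stretch
  set τ : V → ℕ := fun t => if h : ∃ a, 0 < a ∧ a < L ∧ w a = t then Nat.find h else 0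
    with hτdef
  have hτspec : ∀ t ∈ N, 0 < τ t ∧ τ t < L ∧ w (τ t) = t := by
    intro t ht
    simp only [hτdef, dif_pos (hwcover t ht)]
    exact Nat.find_spec (hwcover t ht)
  have hτinj : Set.InjOn τ N := by
    intro a ha b hb hab
    have h1 := (hτspec a ha).2.2
    have h2 := (hτspec b hb).2.2
    rw [← h1, ← h2, hab]
  set T := N.image τ with hTdef
  set as := T.sort (· ≤ ·) with hasdef
  have haslen : as.length = n := by
    rw [hasdef, Finset.length_sort, hTdef, Finset.card_image_of_injOn hτinj]
  have hassort : List.Pairwise (· < ·) as := (Finset.sortedLT_sort T).pairwise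
  have hasmem : ∀ a, a ∈ as ↔ ∃ t ∈ N, τ t = a := by
    intro a
    rw [hasdef, Finset.mem_sort, hTdef, Finset.mem_image]
  have hasprop : ∀ a ∈ as, 0 < a ∧ a < L ∧ w a ∈ N := by
    intro a ha
    obtain ⟨t, ht, rfl⟩ := (hasmem a).mp ha
    exact ⟨(hτspec t ht).1, (hτspec t ht).2.1, by rw [(hτspec t ht).2.2]; exact ht⟩
  set lt0 := dV :: as.map w with hlt0def
  have hltlen : lt0.length = n + 1 := by simp [hlt0def, haslen]
  have hltnodup : lt0.Nodup := by
    rw [hlt0def]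
    refine List.nodup_cons.mpr ⟨?_, ?_⟩
    · intro hmem
      obtain ⟨a, ha, hwa⟩ := List.mem_map.mp hmem
      exact hd (hwa ▸ (hasprop a ha).2.2)
    · refine List.Nodup.map_on ?_ (Finset.sort_nodup _ _)
      intro a ha b hb hab
      obtain ⟨ta, hta, rfl⟩ := (hasmem a).mp ha
      obtain ⟨tb, htb, rfl⟩ := (hasmem b).mp hb
      rw [(hτspec ta hta).2.2, (hτspec tb htb).2.2] at hab
      rw [hab]
  set g : ℕ → V := fun b => lt0.getD (b % (n + 1)) dV with hgdef2
  have hn1pos : 0 < n + 1 := by omega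
  have hg_eq : ∀ b, g b = lt0[b % (n + 1)]'(by rw [hltlen]; exact Nat.mod_lt _ hn1pos) := by
    intro b
    simp only [hgdef2]
    exact List.getD_eq_getElem lt0 dV _
  have hg_lt : ∀ r (h : r < n + 1), g r = lt0[r]'(by rw [hltlen]; exact h) := by
    intro r h
    simp only [hgdef2, Nat.mod_eq_of_lt h]
    exact List.getD_eq_getElem lt0 dV _
  have hg0 : g 0 = dV := by simp [hgdef2, hlt0def]
  have hgper : ∀ b, g (b + (n + 1)) = g b := by
    intro b; simp only [hgdef2, Nat.add_mod_right]
  have hgmod : ∀ b, g b = g (b % (n + 1)) := by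
    intro b; simp only [hgdef2, Nat.mod_mod_of_dvd b (dvd_refl (n + 1))]
  have hginj : ∀ a b, a < n + 1 → b < n + 1 → g a = g b → a = b := by
    intro a b ha hb hab
    rw [hg_lt a ha, hg_lt b hb] at hab
    exact (List.Nodup.getElem_inj_iff hltnodup).mp hab
  have hgelemN : ∀ r, 0 < r → r < n + 1 → g r ∈ N := by
    intro r hr hrn
    obtain ⟨r', rfl⟩ : ∃ r', r = r' + 1 := ⟨r - 1, by omega⟩
    rw [hg_lt _ hrn]
    have hr' : r' < (as.map w).length := by simp [haslen]; omega
    have : lt0[r' + 1]'(by rw [hltlen]; exact hrn) = (as.map w)[r']'hr' := by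
      simp [hlt0def]
    rw [this]
    have hmem : (as.map w)[r']'hr' ∈ as.map w := List.getElem_mem hr'
    obtain ⟨a, ha, hwa⟩ := List.mem_map.mp hmem
    exact hwa ▸ (hasprop a ha).2.2
  have hgdVdep : ∀ b, g b = dV ↔ (n + 1) ∣ b := by
    intro b
    constructor
    · intro hb
      by_contra hdvd
      have hbmod : 0 < b % (n + 1) := by
        rcases Nat.eq_zero_or_pos (b % (n + 1)) with h | h
        · exact absurd (Nat.dvd_of_mod_eq_zero h) hdvd
        · exact h
      have := hgelemN (b % (n + 1)) hbmod (Nat.mod_lt _ hn1pos)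
      rw [← hgmod b, hb] at this
      exact hd this
    · intro hdvd
      have h0 : b % (n + 1) = 0 := Nat.mod_eq_zero_of_dvd hdvd
      rw [hgmod b, h0, hg0]
  have hgne : ∀ b, g b ≠ g (b + 1) := by
    intro b hb
    have hmod : (b + 1) % (n + 1) = (b % (n + 1) + 1) % (n + 1) :=
      (Nat.mod_add_mod b (n + 1) 1).symm
    rw [hgmod b, hgmod (b + 1), hmod] at hb
    have hr : b % (n + 1) < n + 1 := Nat.mod_lt _ hn1pos
    have hr1 : (b % (n + 1) + 1) % (n + 1) < n + 1 := Nat.mod_lt _ hn1pos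
    have heq := hginj _ _ hr hr1 hb
    rcases Nat.lt_or_ge (b % (n + 1) + 1) (n + 1) with h | h
    · rw [Nat.mod_eq_of_lt h] at heq; omega
    · have h2 : b % (n + 1) + 1 = n + 1 := by omega
      rw [h2, Nat.mod_self] at heq
      omega
  have hgspan_pos : ∀ t ∈ N, ∃ r, 0 < r ∧ r < n + 1 ∧ g r = t := by
    intro t ht
    have hτas : τ t ∈ as := (hasmem (τ t)).mpr ⟨t, ht, rfl⟩
    have htmem : t ∈ as.map w := List.mem_map.mpr ⟨τ t, hτas, (hτspec t ht).2.2⟩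
    obtain ⟨r', hr', heq⟩ := List.mem_iff_getElem.mp htmem
    have hr'n : r' < n := by simpa [haslen] using hr'
    refine ⟨r' + 1, by omega, by omega, ?_⟩
    rw [hg_lt (r' + 1) (by omega)]
    simpa [hlt0def] using heq
  have hgwalk : IsPMPDWalkFun N dV (n + 1) g := by
    refine ⟨hgper, hgne, hgdVdep, ?_, ?_⟩
    · intro b
      rcases Nat.eq_zero_or_pos (b % (n + 1)) with h | h
      · right; rw [hgmod b, h, hg0]
      · left; rw [hgmod b]; exact hgelemN _ h (Nat.mod_lt _ hn1pos)
    · intro t ht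
      obtain ⟨r, _, hrn, hrt⟩ := hgspan_pos t ht
      exact ⟨r, hrn, hrt⟩
  set C := segCost c g 0 (n + 1) with hCdef
  have hgF : ∀ m, c (g (m + (n + 1))) (g (m + (n + 1) + 1)) = c (g m) (g (m + 1)) := by
    intro m
    have h1 : m + (n + 1) + 1 = m + 1 + (n + 1) := by omega
    rw [hgper m, h1, hgper (m + 1)]
  have hCshift : ∀ i', segCost c g i' (i' + (n + 1)) = C := by
    intro i'
    rw [hCdef]
    unfold segCost
    have h1 : i' + (n + 1) - i' = n + 1 := by omega
    rw [h1, Nat.sub_zero]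
    simpa using sum_shift (fun m => c (g m) (g (m + 1))) (n + 1) hgF i'
  have hC1 : segCost c g 1 (n + 2) = C := by
    have h1 : n + 2 = 1 + (n + 1) := by omega
    rw [h1]; exact hCshift 1
  have hCmem : C ∈ revCosts c N (n + 1) g := by
    refine ⟨1, n + 2, by omega, hgelemN 1 (by omega) (by omega),
      ⟨by omega, ?_, ?_⟩, ?_, hC1.symm⟩
    · have h1 : n + 2 = 1 + (n + 1) := by omega
      rw [h1, hgper 1]
    · intro m h1 h2 hm
      have hmlt : m % (n + 1) = 1 :=
        hginj (m % (n + 1)) 1 (Nat.mod_lt _ hn1pos) (by omega) (by rw [← hgmod m, hm])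
      rcases Nat.lt_or_ge m (n + 1) with h | h
      · rw [Nat.mod_eq_of_lt h] at hmlt; omega
      · have hmn : m = n + 1 := by omega
        rw [hmn, Nat.mod_self] at hmlt; omega
    · intro t ht
      obtain ⟨r, hr0, hrn, hrt⟩ := hgspan_pos t ht
      exact ⟨r, by omega, by omega, hrt⟩
  have hCub : ∀ y ∈ revCosts c N (n + 1) g, y ≤ C := by
    rintro y ⟨i', j', hi', hgi'N, ⟨hij', hgj', hmin'⟩, _, rfl⟩
    have hmodj : j' % (n + 1) = i' :=
      hginj (j' % (n + 1)) i' (Nat.mod_lt _ hn1pos) hi' (by rw [← hgmod j', hgj'])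
    have hle : j' ≤ i' + (n + 1) := by
      by_contra hgt
      exact hmin' (i' + (n + 1)) (by omega) (by omega) (hgper i')
    have hj' : j' = i' + (n + 1) := by
      rcases Nat.lt_or_ge j' (n + 1) with h | h
      · rw [Nat.mod_eq_of_lt h] at hmodj; omega
      · have h2 : j' - (n + 1) < n + 1 := by omega
        have h3 : j' % (n + 1) = j' - (n + 1) := by
          rw [Nat.mod_eq_sub_mod h, Nat.mod_eq_of_lt h2]
        omega
    rw [hj', hCshift i']
  have hCgr : IsGreatest (revCosts c N (n + 1) g) C := ⟨hCmem, hCub⟩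
  have hCtime : C ∈ pmpdRevTimes c N dV (n + 1) := ⟨g, hgwalk, hCgr⟩
  have hRD1C : RD (n + 1) ≤ C := hRD1.2 hCtime
  -- shortcut the cyclic stretch to bound the tour cost
  set idx : ℕ → ℕ := fun m =>
    if m = 0 then 0 else if m ≤ n then as.getD (m - 1) 0 else L with hidxdef
  have hidx0 : idx 0 = 0 := by simp [hidxdef]
  have hidxmid : ∀ m, 1 ≤ m → m ≤ n → idx m = as.getD (m - 1) 0 := by
    intro m h1 h2
    simp only [hidxdef]
    rw [if_neg (by omega), if_pos h2]
  have hidxlast : idx (n + 1) = L := by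
    simp only [hidxdef]
    rw [if_neg (by omega), if_neg (by omega)]
  have hasglt : ∀ r, r < as.length → 0 < as.getD r 0 ∧ as.getD r 0 < L := by
    intro r h
    rw [List.getD_eq_getElem as 0 h]
    have h2 := hasprop as[r] (List.getElem_mem h)
    exact ⟨h2.1, h2.2.1⟩
  have hidxadj : ∀ m < n + 1, idx m < idx (m + 1) := by
    intro m hm
    rcases Nat.eq_zero_or_pos m with rfl | hmpos
    · rw [hidx0, hidxmid 1 le_rfl (by omega)]
      exact (hasglt (1 - 1) (by rw [haslen]; omega)).1
    · rcases Nat.lt_or_ge m n with h | h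
      · rw [hidxmid m hmpos (by omega), hidxmid (m + 1) (by omega) (by omega)]
        have ha1 : m - 1 < as.length := by rw [haslen]; omega
        have ha2 : m + 1 - 1 < as.length := by rw [haslen]; omega
        rw [List.getD_eq_getElem as 0 ha1, List.getD_eq_getElem as 0 ha2]
        exact List.pairwise_iff_getElem.mp hassort (m - 1) (m + 1 - 1) ha1 ha2 (by omega)
      · have hmn : m = n := by omega
        subst hmn
        rw [hidxmid n hmpos le_rfl, hidxlast]
        exact (hasglt _ (by rw [haslen]; omega)).2
  have hgidx : ∀ m ≤ n + 1, g m = w (idx m) := by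
    intro m hm
    rcases Nat.eq_zero_or_pos m with rfl | hmpos
    · rw [hidx0, hg0, hw0]
    · rcases Nat.lt_or_ge m (n + 1) with h | h
      · rw [hidxmid m hmpos (by omega), hg_lt m h]
        have ha1 : m - 1 < as.length := by rw [haslen]; omega
        rw [List.getD_eq_getElem as 0 ha1]
        have hr' : m - 1 < (as.map w).length := by simp [haslen]; omega
        have h2 : lt0[m]'(by rw [hltlen]; exact h) = (as.map w)[m - 1]'hr' := by
          obtain ⟨m', rfl⟩ : ∃ m', m = m' + 1 := ⟨m - 1, by omega⟩
          simp [hlt0def]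
        rw [h2, List.getElem_map]
      · have hmn : m = n + 1 := by omega
        subst hmn
        have h2 : g (n + 1) = g 0 := by simpa using hgper 0
        rw [hidxlast, hwL, h2, hg0]
  have hCle : C ≤ x := by
    have h1 : C = ∑ m ∈ Finset.range (n + 1), c (w (idx m)) (w (idx (m + 1))) := by
      rw [hCdef]
      unfold segCost
      rw [Nat.sub_zero]
      refine Finset.sum_congr rfl fun m hm => ?_
      rw [Finset.mem_range] at hm
      simp only [Nat.zero_add]
      rw [hgidx m (by omega), hgidx (m + 1) (by omega)]
    have h2 : ∑ m ∈ Finset.range (n + 1), c (w (idx m)) (w (idx (m + 1)))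
        ≤ ∑ m ∈ Finset.range (n + 1), segCost c w (idx m) (idx (m + 1)) :=
      Finset.sum_le_sum fun m hm => c_le_segCost c w htri (hidxadj m (Finset.mem_range.mp hm))
    have h3 := telescope c w idx (n + 1) (fun m hm => le_of_lt (hidxadj m hm))
    rw [hidx0, hidxlast] at h3
    rw [h1]
    calc _ ≤ _ := h2
      _ = segCost c w 0 L := h3
      _ = x := hwseg
  linarith [hRD1C, hCle, hxle]
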